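/- arXiv:2410.09070 — 2 statements merged into one kernel-verified Lean document; each statement's English description precedes it below -/
import Mathlib

section
/- Let χ : ℝ₊ → ℝ be a kernel in the class φ, let r ∈ ℕ, and let f : ℝ₊ → ℝ be a bounded, log-uniformly continuous function on ℝ₊ (i.e., for every ε > 0 there exists δ > 0 such that |f(u) − f(v)| < ε whenever |log u − log v| ≤ δ). Then lim_{w → ∞} ‖E_{w,r}^χ f − f‖_∞ = 0, where ‖·‖_∞ is the sup-norm on ℝ₊. -/
open MeasureTheory Filter Set

/-- The Haar measure `dx/x` on `(0, ∞)`, as a measure on `ℝ`. -/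
noncomputable def mulHaar : Measure ℝ :=
  (volume.restrict (Set.Ioi (0:ℝ))).withDensity fun x => ENNReal.ofReal x⁻¹

/-- Sup-norm of `f` over `(0, ∞)`. -/
noncomputable def supNorm (f : ℝ → ℝ) : ℝ :=
  ⨆ x : Set.Ioi (0:ℝ), |f (x : ℝ)|

/-- The `L^p` norm with respect to the measure `dx/x` on `(0, ∞)`. -/
noncomputable def lpNorm (p : ℝ) (g : ℝ → ℝ) : ℝ :=
  (∫ x, |g x| ^ p ∂mulHaar) ^ (1 / p)

/-- Logarithmic difference of order `m`: `Δ_h^m f (x) = ∑_{j=0}^m (-1)^{m-j} C(m,j) f (x h^j)`. -/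
noncomputable def logDiff (m : ℕ) (f : ℝ → ℝ) (h x : ℝ) : ℝ :=
  ∑ j ∈ Finset.range (m + 1), (-1 : ℝ) ^ (m - j) * (m.choose j : ℝ) * f (x * h ^ j)

/-- Logarithmic modulus of smoothness of order `m`. -/
noncomputable def logModulus (m : ℕ) (f : ℝ → ℝ) (δ : ℝ) : ℝ :=
  ⨆ h : {h : ℝ // 0 < Real.log h ∧ Real.log h ≤ δ},
    supNorm fun x => logDiff m f (h : ℝ) x

/-- The Mellin–Steklov integral of order `r`:
`F_{r,h}(x) = (-log h)^{-r} ∫₁^h ⋯ ∫₁^h ∑_{m=1}^r (-1)^{r-m+1} C(r,m)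
  f (x (t₁⋯t_r)^{m/r}) dt₁/t₁ ⋯ dt_r/t_r`. -/
noncomputable def mellinSteklov (r : ℕ) (f : ℝ → ℝ) (h : ℝ) (x : ℝ) : ℝ :=
  ((-Real.log h) ^ r)⁻¹ *
    ∫ t : Fin r → ℝ in Set.univ.pi fun _ => Set.Icc 1 h,
      (∑ m ∈ Finset.Icc 1 r,
        (-1 : ℝ) ^ ((r : ℤ) - (m : ℤ) + 1) * (r.choose m : ℝ) *
          f (x * (∏ i, t i) ^ ((m : ℝ) / (r : ℝ)))) * ∏ i, (t i)⁻¹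

/-- `M₀(χ) = sup_{u > 0} ∑_{k ∈ ℤ} |χ(e^{-k} u)|`. -/
noncomputable def M0 (χ : ℝ → ℝ) : ℝ :=
  ⨆ u : Set.Ioi (0:ℝ), ∑' k : ℤ, |χ (Real.exp (-(k : ℝ)) * (u : ℝ))|

/-- The Mellin–Steklov exponential sampling operator of order `r`:
`(E_{w,r}^χ f)(x) = ∑_{k ∈ ℤ} χ(e^{-k} x^w) F_{r, e^{1/w}}(e^{k/w})`. -/
noncomputable def samplingOp (χ : ℝ → ℝ) (r : ℕ) (f : ℝ → ℝ) (w : ℝ) (x : ℝ) : ℝ :=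
  ∑' k : ℤ, χ (Real.exp (-(k : ℝ)) * x ^ w) *
    mellinSteklov r f (Real.exp (1 / w)) (Real.exp ((k : ℝ) / w))

/-- The kernel class `φ`: continuity together with conditions (χ₁), (χ₂), (χ₃). -/
structure IsKernel (χ : ℝ → ℝ) : Prop where
  cont : ContinuousOn χ (Set.Ioi 0)
  integrable : Integrable χ mulHaar
  bddOnIcc : ∃ C, ∀ x ∈ Set.Icc (Real.exp (-1)) (Real.exp 1), |χ x| ≤ C
  summable_abs : ∀ u : ℝ, 0 < u → Summable fun k : ℤ => |χ (Real.exp (-(k : ℝ)) * u)|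
  sum_eq_one : ∀ u : ℝ, 0 < u → ∑' k : ℤ, χ (Real.exp (-(k : ℝ)) * u) = 1
  m0_bdd : BddAbove (Set.range fun u : Set.Ioi (0:ℝ) =>
    ∑' k : ℤ, |χ (Real.exp (-(k : ℝ)) * (u : ℝ))|)
  decay : Tendsto (fun γ : ℝ => ⨆ u : Set.Ioi (0:ℝ),
      ∑' k : {k : ℤ // γ < |(k : ℝ) - Real.log (u : ℝ)|},
        |χ (Real.exp (-((k : ℤ) : ℝ)) * (u : ℝ))|)
    atTop (nhds 0)

theorem box_prod_integral (r : ℕ) (g : ℝ → ℝ) (h : ℝ) :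
    ∫ t : Fin r → ℝ in Set.univ.pi fun _ => Set.Icc 1 h, ∏ i, g (t i)
      = (∫ t in Icc (1:ℝ) h, g t) ^ r := by
  rw [← MeasureTheory.integral_indicator (MeasurableSet.univ_pi fun _ => measurableSet_Icc)]
  have : (fun x : Fin r → ℝ => (Set.univ.pi fun _ => Set.Icc 1 h).indicator
      (fun x => ∏ i, g (x i)) x) = fun x => ∏ i, (Set.Icc 1 h).indicator g (x i) := by
    funext x
    by_cases hx : x ∈ Set.univ.pi fun _ => Set.Icc (1:ℝ) h
    · rw [Set.indicator_of_mem hx]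
      exact Finset.prod_congr rfl fun i _ => (Set.indicator_of_mem (hx i (Set.mem_univ i)) g).symm
    · rw [Set.indicator_of_notMem hx]
      rw [Set.mem_pi] at hx
      push_neg at hx
      obtain ⟨i, -, hi⟩ := hx
      exact (Finset.prod_eq_zero (Finset.mem_univ i) (Set.indicator_of_notMem hi g)).symm
  rw [this, MeasureTheory.volume_pi, MeasureTheory.integral_fintype_prod_eq_pow (ι := Fin r) ((Set.Icc (1:ℝ) h).indicator g),
    MeasureTheory.integral_indicator measurableSet_Icc]
  simp

theorem inv_box_integral (r : ℕ) (h : ℝ) (hh : 1 < h) :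
    ∫ t : Fin r → ℝ in Set.univ.pi fun _ => Set.Icc 1 h, ∏ i, (t i)⁻¹
      = (Real.log h) ^ r := by
  rw [box_prod_integral]
  congr 1
  rw [MeasureTheory.integral_Icc_eq_integral_Ioc, ← intervalIntegral.integral_of_le hh.le,
    integral_inv (by rw [Set.uIcc_of_le hh.le]; intro h1; simp at h1; linarith [h1.1])]
  simp

theorem alt_sum_real (r : ℕ) (hr : 0 < r) :
    ∑ j ∈ Finset.range (r + 1), (-1:ℝ) ^ (r - j) * (r.choose j : ℝ) = 0 := by
  have h1 : ∀ j ∈ Finset.range (r + 1), (-1:ℝ) ^ (r - j) * (r.choose j : ℝ)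
      = (-1:ℝ) ^ r * ((-1:ℝ) ^ j * (r.choose j : ℝ)) := by
    intro j hj
    rw [Finset.mem_range] at hj
    have hjr : j ≤ r := by omega
    have : (-1:ℝ) ^ (r - j) * (-1:ℝ) ^ j = (-1:ℝ) ^ r := by
      rw [← pow_add, Nat.sub_add_cancel hjr]
    have h2 : (-1:ℝ) ^ (r - j) = (-1:ℝ) ^ r * (-1:ℝ) ^ j := by
      have hsq : ((-1:ℝ) ^ j) * ((-1:ℝ) ^ j) = 1 := by
        rw [← pow_add, neg_one_pow_eq_one_iff_even (by norm_num : (-1:ℝ) ≠ 1)]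
        exact Even.add_self j
      calc (-1:ℝ) ^ (r - j) = (-1:ℝ) ^ (r-j) * (((-1:ℝ)^j) * ((-1:ℝ)^j)) := by rw [hsq, mul_one]
        _ = (-1:ℝ) ^ r * (-1:ℝ) ^ j := by rw [← mul_assoc, this]
    rw [h2]; ring
  rw [Finset.sum_congr rfl h1, ← Finset.mul_sum]
  have h3 : ∑ j ∈ Finset.range (r + 1), (-1:ℝ) ^ j * (r.choose j : ℝ) = 0 := by
    have := Int.alternating_sum_range_choose_of_ne hr.ne'
    exact_mod_cast congrArg (Int.cast : ℤ → ℝ) this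
  rw [h3, mul_zero]

theorem steklov_bound (r : ℕ) (hr : 0 < r) (f : ℝ → ℝ) (hf : ContinuousOn f (Set.Ioi 0))
    (h : ℝ) (hh : 1 < h) (y : ℝ) (hy : 0 < y) (ε : ℝ) (hε : 0 ≤ ε)
    (hδ : ∀ z : ℝ, 0 < z → |Real.log z - Real.log y| ≤ r * Real.log h → |f z - f y| ≤ ε) :
    |mellinSteklov r f h y - f y| ≤ 2 ^ r * ε := by
  set L := Real.log h with hLdef
  have hL : 0 < L := Real.log_pos hh
  set B : Set (Fin r → ℝ) := Set.univ.pi fun _ => Set.Icc 1 h with hBdef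
  have hBcomp : IsCompact B := isCompact_univ_pi fun _ => isCompact_Icc
  -- facts about points in the box
  have hbox : ∀ t ∈ B, (1:ℝ) ≤ ∏ i, t i ∧ Real.log (∏ i, t i) ≤ r * L := by
    intro t ht
    have h1 : ∀ i, (1:ℝ) ≤ t i := fun i => (ht i (Set.mem_univ i)).1
    have h2 : ∀ i, t i ≤ h := fun i => (ht i (Set.mem_univ i)).2
    have hp1 : (1:ℝ) ≤ ∏ i, t i := by
      calc (1:ℝ) = ∏ _i : Fin r, (1:ℝ) := by simp
        _ ≤ ∏ i, t i := Finset.prod_le_prod (fun i _ => zero_le_one) (fun i _ => h1 i)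
    refine ⟨hp1, ?_⟩
    have hple : ∏ i, t i ≤ h ^ r := by
      calc ∏ i, t i ≤ ∏ _i : Fin r, h :=
            Finset.prod_le_prod (fun i _ => by linarith [h1 i]) (fun i _ => h2 i)
        _ = h ^ r := by simp
    calc Real.log (∏ i, t i) ≤ Real.log (h ^ r) :=
          Real.log_le_log (by linarith) hple
      _ = r * L := by rw [Real.log_pow]
  -- positivity of the weight
  have hPpos : ∀ t ∈ B, (0:ℝ) ≤ ∏ i, (t i)⁻¹ := by
    intro t ht
    exact Finset.prod_nonneg fun i _ => by
      have := (ht i (Set.mem_univ i)).1; positivity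
  -- continuity of the integrand pieces
  have hinner : ∀ q : ℝ, 0 ≤ q → ContinuousOn (fun t : Fin r → ℝ => f (y * (∏ i, t i) ^ q)) B := by
    intro q hq
    have hprod : Continuous fun t : Fin r → ℝ => ∏ i, t i :=
      continuous_finset_prod _ fun i _ => continuous_apply i
    have h1 : ContinuousOn (fun t : Fin r → ℝ => y * (∏ i, t i) ^ q) B :=
      (hprod.continuousOn.rpow_const fun t ht => Or.inr hq).const_smul y
    refine hf.comp h1 fun t ht => ?_
    have h2 := (hbox t ht).1
    have : (0:ℝ) < (∏ i, t i) ^ q := Real.rpow_pos_of_pos (by linarith) q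
    exact mem_Ioi.2 (by positivity)
  set P : (Fin r → ℝ) → ℝ := fun t => ∏ i, (t i)⁻¹ with hPdef
  set S : (Fin r → ℝ) → ℝ := fun t => ∑ m ∈ Finset.Icc 1 r,
      (-1:ℝ) ^ ((r:ℤ) - (m:ℤ) + 1) * (r.choose m : ℝ) * f (y * (∏ i, t i) ^ ((m:ℝ)/(r:ℝ)))
    with hSdef
  have hM : mellinSteklov r f h y = ((-L)^r)⁻¹ * ∫ t in B, S t * P t := rfl
  have hScont : ContinuousOn S B := by
    apply continuousOn_finset_sum
    intro m hm
    exact continuousOn_const.mul (hinner _ (by positivity))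
  have hPcont : ContinuousOn P B := by
    apply continuousOn_finset_prod
    intro i hi
    exact ContinuousOn.inv₀ (continuous_apply i).continuousOn
      fun t ht => ne_of_gt (lt_of_lt_of_le zero_lt_one (ht i (Set.mem_univ i)).1)
  have hmeasB : MeasurableSet B := MeasurableSet.univ_pi fun _ => measurableSet_Icc
  have hSP : IntegrableOn (fun t => S t * P t) B := (hScont.mul hPcont).integrableOn_compact hBcomp
  have hGP : IntegrableOn (fun t => (S t - (-1:ℝ)^r * f y) * P t) B :=
    ((hScont.sub continuousOn_const).mul hPcont).integrableOn_compact hBcomp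
  have hCP : ∀ a : ℝ, IntegrableOn (fun t => a * P t) B := fun a =>
    (continuousOn_const.mul hPcont).integrableOn_compact hBcomp
  have hintP : ∫ t in B, P t = L ^ r := inv_box_integral r h hh
  have hLr : (L:ℝ)^r ≠ 0 := by positivity
  have hA : ((-1:ℝ))^r ≠ 0 := pow_ne_zero _ (by norm_num)
  have hneg : (-L)^r = (-1:ℝ)^r * L^r := by rw [neg_pow]
  have hc : ((-L)^r)⁻¹ * ((-1:ℝ)^r * L^r) = 1 := by
    rw [hneg]; field_simp
  have key : mellinSteklov r f h y - f y
      = ((-L)^r)⁻¹ * ∫ t in B, (S t - (-1:ℝ)^r * f y) * P t := by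
    have e1 : ∫ t in B, (S t - (-1:ℝ)^r * f y) * P t
        = (∫ t in B, S t * P t) - ((-1:ℝ)^r * f y) * (L ^ r) := by
      simp_rw [sub_mul]
      rw [MeasureTheory.integral_sub hSP (hCP _), MeasureTheory.integral_const_mul, hintP]
    rw [e1, hM]
    linear_combination (f y) * hc
  -- pointwise bound
  have hGbound : ∀ t ∈ B, |S t - (-1:ℝ)^r * f y| ≤ 2^r * ε := by
    intro t ht
    have hu1 : (1:ℝ) ≤ ∏ i, t i := (hbox t ht).1
    have hu0 : (0:ℝ) < ∏ i, t i := by linarith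
    have hlogu : Real.log (∏ i, t i) ≤ r * L := (hbox t ht).2
    have hlogu0 : 0 ≤ Real.log (∏ i, t i) := Real.log_nonneg hu1
    set g : ℕ → ℝ := fun j => f (y * (∏ i, t i) ^ ((j:ℝ)/(r:ℝ))) with hgdef
    have hg0 : g 0 = f y := by
      simp only [hgdef, Nat.cast_zero, zero_div, Real.rpow_zero, mul_one]
    have hgb : ∀ j ≤ r, |g j - f y| ≤ ε := by
      intro j hj
      have hz : (0:ℝ) < y * (∏ i, t i) ^ ((j:ℝ)/(r:ℝ)) := by
        have := Real.rpow_pos_of_pos hu0 ((j:ℝ)/(r:ℝ)); positivity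
      apply hδ _ hz
      rw [Real.log_mul (ne_of_gt hy) (ne_of_gt (Real.rpow_pos_of_pos hu0 _)),
        Real.log_rpow hu0]
      rw [add_sub_cancel_left, abs_of_nonneg (by positivity)]
      calc (j:ℝ)/(r:ℝ) * Real.log (∏ i, t i) ≤ 1 * Real.log (∏ i, t i) := by
            apply mul_le_mul_of_nonneg_right _ hlogu0
            rw [div_le_one (by exact_mod_cast hr)]
            exact_mod_cast hj
        _ ≤ r * L := by rw [one_mul]; exact hlogu
    have h0notin : (0:ℕ) ∉ Finset.Icc 1 r := by simp
    have hsplit : Finset.range (r+1) = insert 0 (Finset.Icc 1 r) := by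
      ext j; simp [Finset.mem_range, Finset.mem_Icc]; omega
    have hsign : ∀ m ∈ Finset.Icc 1 r,
        (-1:ℝ) ^ ((r:ℤ) - (m:ℤ) + 1) * (r.choose m : ℝ) * g m
          = -((-1:ℝ) ^ (r - m) * (r.choose m : ℝ) * g m) := by
      intro m hm
      rw [Finset.mem_Icc] at hm
      have : ((r:ℤ) - (m:ℤ) + 1) = ((r - m + 1 : ℕ) : ℤ) := by push_cast; omega
      rw [this, zpow_natCast, pow_succ]
      ring
    have hSval : S t = -∑ j ∈ Finset.Icc 1 r, (-1:ℝ) ^ (r - j) * (r.choose j : ℝ) * g j := by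
      simp only [hSdef]
      rw [Finset.sum_congr rfl hsign, Finset.sum_neg_distrib]
    have hsum1 : ∑ j ∈ Finset.range (r+1), (-1:ℝ) ^ (r - j) * (r.choose j : ℝ) * g j
        = (-1:ℝ)^r * f y - S t := by
      rw [hsplit, Finset.sum_insert h0notin, hSval, hg0]
      simp only [Nat.sub_zero, Nat.choose_zero_right, Nat.cast_one, mul_one]
      ring
    have hsum2 : S t - (-1:ℝ)^r * f y
        = -∑ j ∈ Finset.range (r+1), (-1:ℝ) ^ (r - j) * (r.choose j : ℝ) * (g j - f y) := by
      have e : ∑ j ∈ Finset.range (r+1), (-1:ℝ) ^ (r - j) * (r.choose j : ℝ) * (g j - f y)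
          = (∑ j ∈ Finset.range (r+1), (-1:ℝ) ^ (r - j) * (r.choose j : ℝ) * g j)
            - (∑ j ∈ Finset.range (r+1), (-1:ℝ) ^ (r - j) * (r.choose j : ℝ)) * f y := by
        rw [Finset.sum_mul, ← Finset.sum_sub_distrib]
        exact Finset.sum_congr rfl fun j _ => by ring
      rw [e, alt_sum_real r hr, hsum1]
      ring
    rw [hsum2, abs_neg]
    calc |∑ j ∈ Finset.range (r+1), (-1:ℝ) ^ (r - j) * (r.choose j : ℝ) * (g j - f y)|
        ≤ ∑ j ∈ Finset.range (r+1), |(-1:ℝ) ^ (r - j) * (r.choose j : ℝ) * (g j - f y)| :=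
          Finset.abs_sum_le_sum_abs _ _
      _ ≤ ∑ j ∈ Finset.range (r+1), (r.choose j : ℝ) * ε := by
          apply Finset.sum_le_sum
          intro j hj
          rw [Finset.mem_range] at hj
          rw [abs_mul, abs_mul, abs_pow, abs_neg, abs_one, one_pow, one_mul,
            Nat.abs_cast]
          exact mul_le_mul_of_nonneg_left (hgb j (by omega)) (by positivity)
      _ = 2^r * ε := by
          rw [← Finset.sum_mul]
          congr 1
          exact_mod_cast Nat.sum_range_choose r
  -- final estimate
  rw [key, abs_mul]
  have habs : |((-L)^r)⁻¹| = ((L:ℝ)^r)⁻¹ := by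
    rw [abs_inv, abs_pow, abs_neg, abs_of_pos hL]
  rw [habs]
  have hint2 : |∫ t in B, (S t - (-1:ℝ)^r * f y) * P t| ≤ 2^r * ε * L^r := by
    calc |∫ t in B, (S t - (-1:ℝ)^r * f y) * P t|
        ≤ ∫ t in B, |S t - (-1:ℝ)^r * f y| * |P t| := by
          simpa [Real.norm_eq_abs] using
            MeasureTheory.norm_integral_le_integral_norm (fun t => (S t - (-1:ℝ)^r * f y) * P t)
              (μ := volume.restrict B)
      _ ≤ ∫ t in B, (2^r * ε) * P t := by
          have habsint : IntegrableOn (fun t => |S t - (-1:ℝ)^r * f y| * |P t|) B :=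
            ((hScont.sub continuousOn_const).abs.mul hPcont.abs).integrableOn_compact hBcomp
          apply MeasureTheory.setIntegral_mono_on habsint (hCP _) hmeasB
          intro t ht
          rw [abs_of_nonneg (hPpos t ht)]
          exact mul_le_mul_of_nonneg_right (hGbound t ht) (hPpos t ht)
      _ = 2^r * ε * L^r := by rw [MeasureTheory.integral_const_mul, hintP]
  calc ((L:ℝ)^r)⁻¹ * |∫ t in B, (S t - (-1:ℝ)^r * f y) * P t|
      ≤ ((L:ℝ)^r)⁻¹ * (2^r * ε * L^r) := by
        apply mul_le_mul_of_nonneg_left hint2 (by positivity)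
    _ = 2^r * ε := by field_simp

theorem cont_of_huc (f : ℝ → ℝ)
    (huc : ∀ ε > (0:ℝ), ∃ δ > (0:ℝ), ∀ u v : ℝ, 0 < u → 0 < v →
      |Real.log u - Real.log v| ≤ δ → |f u - f v| < ε) :
    ContinuousOn f (Set.Ioi 0) := by
  have hg : Continuous fun a : ℝ => f (Real.exp a) := by
    rw [Metric.continuous_iff]
    intro b ε hε
    obtain ⟨δ, hδpos, hδ⟩ := huc ε hε
    refine ⟨δ, hδpos, fun a hab => ?_⟩
    have := hδ (Real.exp a) (Real.exp b) (Real.exp_pos a) (Real.exp_pos b)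
      (by rw [Real.log_exp, Real.log_exp]
          exact le_of_lt (by simpa [Real.dist_eq] using hab))
    simpa [Real.dist_eq] using this
  have h2 : ContinuousOn (fun x => f (Real.exp (Real.log x))) (Set.Ioi 0) :=
    hg.comp_continuousOn (Real.continuousOn_log.mono fun x hx => hx.ne')
  exact h2.congr fun x hx => by beta_reduce; rw [Real.exp_log hx]

/-- uniform convergence of `E_{w,r}^χ f` for bounded log-uniformly
continuous `f`. -/
theorem stmt_7 (χ : ℝ → ℝ) (hχ : IsKernel χ) (r : ℕ) (hr : 0 < r)
    (f : ℝ → ℝ) (hbdd : ∃ C, ∀ y : ℝ, 0 < y → |f y| ≤ C)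
    (huc : ∀ ε > (0:ℝ), ∃ δ > (0:ℝ), ∀ u v : ℝ, 0 < u → 0 < v →
      |Real.log u - Real.log v| ≤ δ → |f u - f v| < ε) :
    Tendsto (fun w => supNorm fun x => samplingOp χ r f w x - f x) atTop (nhds 0) := by
  classical
  have hfc : ContinuousOn f (Set.Ioi 0) := cont_of_huc f huc
  obtain ⟨C₀, hC₀⟩ := hbdd
  set C := |C₀| with hCdef
  have hC : ∀ y : ℝ, 0 < y → |f y| ≤ C := fun y hy => (hC₀ y hy).trans (le_abs_self C₀)
  have hC0 : 0 ≤ C := abs_nonneg _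
  set M : ℝ := sSup (Set.range fun u : Set.Ioi (0:ℝ) =>
      ∑' k : ℤ, |χ (Real.exp (-(k : ℝ)) * (u : ℝ))|) with hMdef
  have hMle : ∀ u : ℝ, 0 < u → (∑' k : ℤ, |χ (Real.exp (-(k:ℝ)) * u)|) ≤ M :=
    fun u hu => le_csSup hχ.m0_bdd ⟨⟨u, hu⟩, rfl⟩
  have hM0 : 0 ≤ M := le_trans (tsum_nonneg fun k => abs_nonneg _) (hMle 1 one_pos)
  rw [Metric.tendsto_atTop]
  intro ε' hε'
  set K : ℝ := (2^r + 1) * (M + 1) + 2^r + 2*C + 1 with hKdef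
  have hKpos : 0 < K := by positivity
  set ε : ℝ := min 1 (ε' / (2*K)) with hεdef
  have hεpos : 0 < ε := lt_min one_pos (by positivity)
  have hε1 : ε ≤ 1 := min_le_left _ _
  have hεK : ε * K ≤ ε' / 2 := by
    have h1 : ε ≤ ε' / (2*K) := min_le_right _ _
    calc ε * K ≤ (ε' / (2*K)) * K := mul_le_mul_of_nonneg_right h1 hKpos.le
      _ = ε' / 2 := by field_simp
  obtain ⟨δ, hδpos, hδ⟩ := huc ε hεpos
  obtain ⟨γ, hγbound, hγ0⟩ : ∃ γ : ℝ, (⨆ u : Set.Ioi (0:ℝ),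
      ∑' k : {k : ℤ // γ < |(k : ℝ) - Real.log (u : ℝ)|},
        |χ (Real.exp (-((k : ℤ) : ℝ)) * (u : ℝ))|) < ε ∧ 0 ≤ γ :=
    ((hχ.decay.eventually_lt_const hεpos).and (eventually_ge_atTop 0)).exists
  refine ⟨max (max ((r:ℝ) / δ) (γ / δ)) 1, fun w hw => ?_⟩
  have hw1 : (1:ℝ) ≤ w := le_trans (le_max_right _ _) hw
  have hw0 : (0:ℝ) < w := lt_of_lt_of_le one_pos hw1
  have hrw : (r:ℝ) / w ≤ δ := by
    have h1 : (r:ℝ) / δ ≤ w := le_trans ((le_max_left _ _).trans (le_max_left _ _)) hw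
    rw [div_le_iff₀ hδpos] at h1
    rw [div_le_iff₀ hw0]
    nlinarith
  have hγw : γ / w ≤ δ := by
    have h1 : γ / δ ≤ w := le_trans ((le_max_right _ _).trans (le_max_left _ _)) hw
    rw [div_le_iff₀ hδpos] at h1
    rw [div_le_iff₀ hw0]
    nlinarith
  have hh1 : 1 < Real.exp (1/w) := by simpa using Real.exp_lt_exp.mpr (show (0:ℝ) < 1/w by positivity)
  have hLw : Real.log (Real.exp (1/w)) = 1/w := Real.log_exp _
  have hstek : ∀ y : ℝ, 0 < y →
      |mellinSteklov r f (Real.exp (1/w)) y - f y| ≤ 2^r * ε := by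
    intro y hy
    apply steklov_bound r hr f hfc _ hh1 y hy ε hεpos.le
    intro z hz hzle
    rw [hLw] at hzle
    refine le_of_lt (hδ z y hz hy ?_)
    calc |Real.log z - Real.log y| ≤ r * (1/w) := hzle
      _ = (r:ℝ)/w := by ring
      _ ≤ δ := hrw
  have hmain : ∀ x : ℝ, 0 < x → |samplingOp χ r f w x - f x| ≤ ε' / 2 := by
    intro x hx
    have hupos : 0 < x ^ w := Real.rpow_pos_of_pos hx w
    have hlogu : Real.log (x ^ w) = w * Real.log x := Real.log_rpow hx w
    set u := x ^ w with hu
    set F : ℤ → ℝ := fun k => mellinSteklov r f (Real.exp (1/w)) (Real.exp ((k:ℝ)/w)) with hFdef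
    have hFfx : ∀ k : ℤ, |F k - f x| ≤ 2^r * ε + 2*C := by
      intro k
      calc |F k - f x|
          ≤ |F k - f (Real.exp ((k:ℝ)/w))| + |f (Real.exp ((k:ℝ)/w)) - f x| :=
            abs_sub_le _ _ _
        _ ≤ 2^r * ε + (C + C) := by
            refine add_le_add (hstek _ (Real.exp_pos _)) ?_
            calc |f (Real.exp ((k:ℝ)/w)) - f x|
                ≤ |f (Real.exp ((k:ℝ)/w))| + |f x| := abs_sub _ _
              _ ≤ C + C := add_le_add (hC _ (Real.exp_pos _)) (hC _ hx)
        _ = 2^r * ε + 2*C := by ring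
    have hχsum : Summable fun k : ℤ => |χ (Real.exp (-(k:ℝ)) * u)| := hχ.summable_abs u hupos
    have hχsum' : Summable fun k : ℤ => χ (Real.exp (-(k:ℝ)) * u) := hχsum.of_abs
    have habsle : ∀ k : ℤ, |χ (Real.exp (-(k:ℝ)) * u) * (F k - f x)|
        ≤ |χ (Real.exp (-(k:ℝ)) * u)| * (2^r * ε + 2*C) := fun k => by
      rw [abs_mul]
      exact mul_le_mul_of_nonneg_left (hFfx k) (abs_nonneg _)
    have hsum2 : Summable fun k : ℤ => |χ (Real.exp (-(k:ℝ)) * u) * (F k - f x)| :=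
      Summable.of_nonneg_of_le (fun k => abs_nonneg _) habsle (hχsum.mul_right _)
    have hsum3 : Summable fun k : ℤ => χ (Real.exp (-(k:ℝ)) * u) * (F k - f x) := hsum2.of_abs
    have hsumF : Summable fun k : ℤ => χ (Real.exp (-(k:ℝ)) * u) * F k := by
      have := hsum3.add (hχsum'.mul_right (f x))
      refine this.congr fun k => ?_
      ring
    have hop : samplingOp χ r f w x - f x
        = ∑' k : ℤ, χ (Real.exp (-(k:ℝ)) * u) * (F k - f x) := by
      have h1 : samplingOp χ r f w x = ∑' k : ℤ, χ (Real.exp (-(k:ℝ)) * u) * F k := rfl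
      have h2 : (∑' k : ℤ, χ (Real.exp (-(k:ℝ)) * u) * (F k - f x))
          = (∑' k : ℤ, χ (Real.exp (-(k:ℝ)) * u) * F k)
            - ∑' k : ℤ, χ (Real.exp (-(k:ℝ)) * u) * f x := by
        rw [← Summable.tsum_sub hsumF (hχsum'.mul_right (f x))]
        exact tsum_congr fun k => by ring
      rw [h2, tsum_mul_right, hχ.sum_eq_one u hupos, one_mul, h1]
    rw [hop]
    have habs : |∑' k : ℤ, χ (Real.exp (-(k:ℝ)) * u) * (F k - f x)|
        ≤ ∑' k : ℤ, |χ (Real.exp (-(k:ℝ)) * u) * (F k - f x)| := by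
      simpa only [Real.norm_eq_abs] using
        norm_tsum_le_tsum_norm (f := fun k : ℤ => χ (Real.exp (-(k:ℝ)) * u) * (F k - f x))
          (by simpa only [Real.norm_eq_abs] using hsum2)
    set s : Set ℤ := {k : ℤ | γ < |(k:ℝ) - Real.log u|} with hsdef
    have hsplit : (∑' k : s, |χ (Real.exp (-((k:ℤ):ℝ)) * u) * (F k - f x)|)
        + (∑' k : ↥sᶜ, |χ (Real.exp (-((k:ℤ):ℝ)) * u) * (F k - f x)|)
        = ∑' k : ℤ, |χ (Real.exp (-(k:ℝ)) * u) * (F k - f x)| :=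
      hsum2.tsum_subtype_add_tsum_subtype_compl s
    have hfar : (∑' k : s, |χ (Real.exp (-((k:ℤ):ℝ)) * u) * (F k - f x)|)
        ≤ ε * (2^r * ε + 2*C) := by
      have htail : (∑' k : s, |χ (Real.exp (-((k:ℤ):ℝ)) * u)|) ≤ ε := by
        have hbddγ : BddAbove (Set.range fun v : Set.Ioi (0:ℝ) =>
            ∑' k : {k : ℤ // γ < |(k : ℝ) - Real.log (v : ℝ)|},
              |χ (Real.exp (-((k : ℤ) : ℝ)) * (v : ℝ))|) := by
          refine ⟨M, ?_⟩
          rintro _ ⟨v, rfl⟩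
          exact le_trans (Summable.tsum_subtype_le (fun k : ℤ => |χ (Real.exp (-(k:ℝ)) * (v:ℝ))|) _
            (fun _ => abs_nonneg _) (hχ.summable_abs _ v.2)) (hMle _ v.2)
        refine le_trans ?_ hγbound.le
        exact le_ciSup hbddγ (⟨u, hupos⟩ : Set.Ioi (0:ℝ))
      calc (∑' k : s, |χ (Real.exp (-((k:ℤ):ℝ)) * u) * (F k - f x)|)
          ≤ ∑' k : s, |χ (Real.exp (-((k:ℤ):ℝ)) * u)| * (2^r * ε + 2*C) :=
            Summable.tsum_le_tsum (fun k => habsle k) (hsum2.subtype s) ((hχsum.subtype s).mul_right _)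
        _ = (∑' k : s, |χ (Real.exp (-((k:ℤ):ℝ)) * u)|) * (2^r * ε + 2*C) := tsum_mul_right
        _ ≤ ε * (2^r * ε + 2*C) := mul_le_mul_of_nonneg_right htail (by positivity)
    have hnear : (∑' k : ↥sᶜ, |χ (Real.exp (-((k:ℤ):ℝ)) * u) * (F k - f x)|)
        ≤ M * (2^r * ε + ε) := by
      have hnk : ∀ k : ↥sᶜ, |F (k:ℤ) - f x| ≤ 2^r * ε + ε := by
        rintro ⟨k, hk⟩
        have hk' : |(k:ℝ) - Real.log u| ≤ γ := not_lt.mp hk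
        have hflog : |f (Real.exp ((k:ℝ)/w)) - f x| ≤ ε := by
          refine le_of_lt (hδ _ _ (Real.exp_pos _) hx ?_)
          rw [Real.log_exp]
          have : (k:ℝ)/w - Real.log x = ((k:ℝ) - Real.log u) / w := by
            rw [hlogu]; field_simp
          rw [this, abs_div, abs_of_pos hw0]
          calc |(k:ℝ) - Real.log u| / w ≤ γ / w := (div_le_div_iff_of_pos_right hw0).mpr hk'
            _ ≤ δ := hγw
        calc |F (k:ℤ) - f x|
            ≤ |F (k:ℤ) - f (Real.exp ((k:ℝ)/w))| + |f (Real.exp ((k:ℝ)/w)) - f x| :=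
              abs_sub_le _ _ _
          _ ≤ 2^r * ε + ε := add_le_add (hstek _ (Real.exp_pos _)) hflog
      calc (∑' k : ↥sᶜ, |χ (Real.exp (-((k:ℤ):ℝ)) * u) * (F k - f x)|)
          ≤ ∑' k : ↥sᶜ, |χ (Real.exp (-((k:ℤ):ℝ)) * u)| * (2^r * ε + ε) := by
            refine Summable.tsum_le_tsum (fun k => ?_) (hsum2.subtype _) ((hχsum.subtype _).mul_right _)
            rw [abs_mul]
            exact mul_le_mul_of_nonneg_left (hnk k) (abs_nonneg _)
        _ = (∑' k : ↥sᶜ, |χ (Real.exp (-((k:ℤ):ℝ)) * u)|) * (2^r * ε + ε) := tsum_mul_right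
        _ ≤ M * (2^r * ε + ε) := by
            refine mul_le_mul_of_nonneg_right ?_ (by positivity)
            exact le_trans (Summable.tsum_subtype_le (fun k : ℤ => |χ (Real.exp (-(k:ℝ)) * u)|) _
              (fun _ => abs_nonneg _) hχsum) (hMle u hupos)
    calc |∑' k : ℤ, χ (Real.exp (-(k:ℝ)) * u) * (F k - f x)|
        ≤ ∑' k : ℤ, |χ (Real.exp (-(k:ℝ)) * u) * (F k - f x)| := habs
      _ = (∑' k : s, |χ (Real.exp (-((k:ℤ):ℝ)) * u) * (F k - f x)|)
          + (∑' k : ↥sᶜ, |χ (Real.exp (-((k:ℤ):ℝ)) * u) * (F k - f x)|) := hsplit.symm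
      _ ≤ ε * (2^r * ε + 2*C) + M * (2^r * ε + ε) := add_le_add hfar hnear
      _ ≤ ε * ((2^r + 1) * (M + 1) + 2^r + 2*C + 1) := by
          have hp : (0:ℝ) ≤ 2^r := (pow_pos (by norm_num : (0:ℝ)<2) r).le
          have key2 : ∀ e Mv Cv : ℝ, 0 < e → e ≤ 1 → 0 ≤ Mv → 0 ≤ Cv →
              e*(2^r*e+2*Cv) + Mv*(2^r*e+e) ≤ e*((2^r+1)*(Mv+1)+2^r+2*Cv+1) := by
            intro e Mv Cv he he1 hMv hCv
            nlinarith [mul_nonneg (mul_nonneg he.le hp) (sub_nonneg.mpr he1),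
              mul_nonneg he.le hp, he.le]
          exact key2 ε M C hεpos hε1 hM0 hC0
      _ = ε * K := by rw [hKdef]
      _ ≤ ε' / 2 := hεK
  have hsup : supNorm (fun x => samplingOp χ r f w x - f x) ≤ ε'/2 := by
    apply Real.iSup_le _ (by positivity)
    rintro ⟨x, hx⟩
    exact hmain x hx
  have hsup0 : 0 ≤ supNorm (fun x => samplingOp χ r f w x - f x) :=
    Real.iSup_nonneg fun _ => abs_nonneg _
  rw [Real.dist_eq, sub_zero, abs_of_nonneg hsup0]
  linarith
end

section
/- Let χ : ℝ₊ → ℝ be a kernel in the class φ, let r ∈ ℕ, and let f : ℝ₊ → ℝ be a continuous bounded function with compact support contained in ℝ₊. Then lim_{w → ∞} ‖E_{w,r}^χ f − f‖_∞ = 0, where ‖·‖_∞ is the sup-norm on ℝ₊. -/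
open MeasureTheory Filter Set

lemma neg_one_zpow_eq (r m : ℕ) : (-1:ℝ)^((r:ℤ)-(m:ℤ)+1) = -((-1:ℝ)^r * (-1:ℝ)^m) := by
  have hne : (-1:ℝ) ≠ 0 := by norm_num
  rw [zpow_add₀ hne, zpow_sub₀ hne]
  simp [zpow_natCast, div_eq_mul_inv]
  rcases Nat.even_or_odd m with h | h
  · simp [h.neg_one_pow]
  · simp [h.neg_one_pow]

lemma coeff_sum (r : ℕ) (hr : 0 < r) :
    ∑ m ∈ Finset.Icc 1 r, (-1:ℝ)^((r:ℤ)-(m:ℤ)+1) * (r.choose m : ℝ) = (-1)^r := by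
  have h1 : ∀ m ∈ Finset.Icc 1 r, (-1:ℝ)^((r:ℤ)-(m:ℤ)+1) * (r.choose m : ℝ)
      = (-1:ℝ)^r * (-((-1:ℝ)^m * (r.choose m : ℝ))) := by
    intro m _; rw [neg_one_zpow_eq]; ring
  rw [Finset.sum_congr rfl h1, ← Finset.mul_sum]
  have h3 : ∑ m ∈ Finset.range (r+1), (-1:ℝ)^m * (r.choose m : ℝ) = 0 := by
    have h := Int.alternating_sum_range_choose_of_ne (n := r) hr.ne'
    have := congrArg (fun z : ℤ => (z : ℝ)) h
    push_cast at this
    simpa using this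
  have h4 : Finset.Icc 1 r = Finset.range (r+1) \ {0} := by
    ext m; simp [Nat.lt_succ_iff, Nat.one_le_iff_ne_zero]; tauto
  have h2 : ∑ m ∈ Finset.Icc 1 r, -((-1:ℝ)^m * (r.choose m : ℝ)) = 1 := by
    rw [h4, Finset.sum_neg_distrib, Finset.sum_sdiff_eq_sub (by simp), h3]
    simp
  rw [h2, mul_one]

lemma integral_Icc_inv (h : ℝ) (h1 : 1 ≤ h) : ∫ x in Icc (1:ℝ) h, x⁻¹ = Real.log h := by
  rw [integral_Icc_eq_integral_Ioc, ← intervalIntegral.integral_of_le h1,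
    integral_inv_of_pos one_pos (lt_of_lt_of_le one_pos h1), div_one]

lemma indicator_pi_prod (r : ℕ) (h : ℝ) (g : ℝ → ℝ) (t : Fin r → ℝ) :
    (Set.univ.pi fun _ : Fin r => Icc (1:ℝ) h).indicator (fun t => ∏ i, g (t i)) t
      = ∏ i, (Icc (1:ℝ) h).indicator g (t i) := by
  by_cases ht : t ∈ Set.univ.pi fun _ : Fin r => Icc (1:ℝ) h
  · rw [Set.indicator_of_mem ht]
    exact Finset.prod_congr rfl fun i _ => (Set.indicator_of_mem (ht i trivial) g).symm
  · rw [Set.indicator_of_notMem ht]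
    simp only [Set.mem_pi, Set.mem_univ, forall_true_left, true_implies] at ht
    push_neg at ht
    obtain ⟨i, hi⟩ := ht
    exact (Finset.prod_eq_zero (Finset.mem_univ i) (Set.indicator_of_notMem hi g)).symm

lemma integral_pi_indicator (r : ℕ) (h : ℝ) (g : ℝ → ℝ) :
    (∫ t : Fin r → ℝ in Set.univ.pi fun _ => Icc (1:ℝ) h, ∏ i, g (t i))
      = (∫ x in Icc (1:ℝ) h, g x) ^ r := by
  rw [← integral_indicator (MeasurableSet.univ_pi fun _ => measurableSet_Icc)]
  simp_rw [indicator_pi_prod r h g]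
  rw [volume_pi, integral_fintype_prod_eq_pow (ι := Fin r) ((Icc (1:ℝ) h).indicator g)]
  rw [integral_indicator measurableSet_Icc]
  simp

lemma integral_pi_inv (r : ℕ) (h : ℝ) (h1 : 1 ≤ h) :
    (∫ t : Fin r → ℝ in Set.univ.pi fun _ => Icc (1:ℝ) h, ∏ i, (t i)⁻¹)
      = (Real.log h) ^ r := by
  rw [integral_pi_indicator r h (fun x => x⁻¹), integral_Icc_inv h h1]

lemma aux_uc (f : ℝ → ℝ) (hfc : ContinuousOn f (Set.Ioi 0))
    (hsupp : ∃ K : Set ℝ, IsCompact K ∧ K ⊆ Set.Ioi 0 ∧ Function.support f ⊆ K) :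
    ∀ ε > 0, ∃ δ > 0, ∀ a b : ℝ, |a - b| ≤ δ → |f (Real.exp a) - f (Real.exp b)| ≤ ε := by
  obtain ⟨K, hK, hKpos, hKsupp⟩ := hsupp
  set g : ℝ → ℝ := fun t => f (Real.exp t) with hg
  have hgc : Continuous g :=
    hfc.comp_continuous Real.continuous_exp fun x => Real.exp_pos x
  have hgs : HasCompactSupport g := by
    apply HasCompactSupport.intro (hK.image_of_continuousOn
      (Real.continuousOn_log.mono fun x hx => (ne_of_gt (hKpos hx))))
    intro t ht
    by_contra hft
    have : Real.exp t ∈ K := hKsupp hft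
    exact ht ⟨Real.exp t, this, Real.log_exp t⟩
  have hu : UniformContinuous g := hgs.uniformContinuous_of_continuous hgc
  intro ε hε
  rcases Metric.uniformContinuous_iff.mp hu ε hε with ⟨δ, hδ, hd⟩
  refine ⟨δ/2, by linarith, fun a b hab => ?_⟩
  have : dist a b < δ := by rw [Real.dist_eq]; linarith
  exact le_of_lt (by simpa [Real.dist_eq] using hd this)
lemma aux_integrableOn (r : ℕ) (f : ℝ → ℝ) (hfc : ContinuousOn f (Set.Ioi 0)) (y : ℝ) (hy : 0 < y)
    (h : ℝ) (c : ℕ → ℝ) :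
    IntegrableOn (fun t : Fin r → ℝ =>
      (∑ m ∈ Finset.Icc 1 r, c m * f (y * (∏ i, t i) ^ ((m : ℝ) / (r : ℝ)))) * ∏ i, (t i)⁻¹)
      (Set.univ.pi fun _ => Set.Icc 1 h) volume := by
  set P := Set.univ.pi fun _ : Fin r => Set.Icc (1:ℝ) h with hP
  have hPc : IsCompact P := isCompact_univ_pi fun _ => isCompact_Icc
  have hprod : Continuous fun t : Fin r → ℝ => ∏ i, t i :=
    continuous_finset_prod _ fun i _ => continuous_apply i
  have hspos : ∀ t ∈ P, 0 < ∏ i, t i := by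
    intro t ht
    exact Finset.prod_pos fun i _ => lt_of_lt_of_le one_pos (ht i trivial).1
  apply ContinuousOn.integrableOn_compact hPc
  apply ContinuousOn.mul
  · apply continuousOn_finset_sum
    intro m _
    apply ContinuousOn.mul continuousOn_const
    apply hfc.comp
    · apply ContinuousOn.mul continuousOn_const
      exact ContinuousOn.rpow_const hprod.continuousOn
        (fun t ht => Or.inl (ne_of_gt (hspos t ht)))
    · intro t ht
      exact mul_pos hy (Real.rpow_pos_of_pos (hspos t ht) _)
  · apply continuousOn_finset_prod
    intro i _
    exact ContinuousOn.inv₀ (continuous_apply i).continuousOn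
      (fun t ht => ne_of_gt (lt_of_lt_of_le one_pos (ht i trivial).1))

lemma aux_integrableOn_inv (r : ℕ) (h : ℝ) :
    IntegrableOn (fun t : Fin r → ℝ => ∏ i, (t i)⁻¹)
      (Set.univ.pi fun _ => Set.Icc 1 h) volume := by
  apply ContinuousOn.integrableOn_compact (isCompact_univ_pi fun _ => isCompact_Icc)
  apply continuousOn_finset_prod
  intro i _
  exact ContinuousOn.inv₀ (continuous_apply i).continuousOn
    (fun t ht => ne_of_gt (lt_of_lt_of_le one_pos (ht i trivial).1))

noncomputable def msCoeff (r m : ℕ) : ℝ := (-1 : ℝ) ^ ((r : ℤ) - (m : ℤ) + 1) * (r.choose m : ℝ)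

lemma msCoeff_sum (r : ℕ) (hr : 0 < r) :
    ∑ m ∈ Finset.Icc 1 r, msCoeff r m = (-1:ℝ)^r := coeff_sum r hr

lemma msCoeff_abs (r m : ℕ) : |msCoeff r m| = (r.choose m : ℝ) := by
  rw [msCoeff, abs_mul, abs_of_nonneg (by positivity : (0:ℝ) ≤ (r.choose m : ℝ))]
  rcases Int.even_or_odd ((r : ℤ) - (m : ℤ) + 1) with hp | hp
  · rw [hp.neg_one_zpow, abs_one, one_mul]
  · rw [hp.neg_one_zpow]; norm_num

lemma mellinSteklov_eq (r : ℕ) (f : ℝ → ℝ) (h x : ℝ) :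
    mellinSteklov r f h x = ((-Real.log h) ^ r)⁻¹ *
    ∫ t : Fin r → ℝ in Set.univ.pi fun _ => Set.Icc 1 h,
      (∑ m ∈ Finset.Icc 1 r, msCoeff r m * f (x * (∏ i, t i) ^ ((m : ℝ) / (r : ℝ))))
        * ∏ i, (t i)⁻¹ := rfl

lemma steklov_close (r : ℕ) (hr : 0 < r) (f : ℝ → ℝ) (hfc : ContinuousOn f (Set.Ioi 0))
    (huc : ∀ ε > 0, ∃ δ > 0, ∀ a b : ℝ, |a - b| ≤ δ → |f (Real.exp a) - f (Real.exp b)| ≤ ε) :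
    ∀ ε > 0, ∃ W : ℝ, 1 ≤ W ∧ ∀ w ≥ W, ∀ y > 0,
      |mellinSteklov r f (Real.exp (1/w)) y - f y| ≤ ε := by
  intro ε hε
  set ε' : ℝ := ε / 2^r with hε'def
  have hε' : 0 < ε' := by positivity
  obtain ⟨δ, hδ, hδf⟩ := huc ε' hε'
  refine ⟨max 1 (r/δ), le_max_left _ _, fun w hw y hy => ?_⟩
  have hw1 : (1:ℝ) ≤ w := le_trans (le_max_left _ _) hw
  have hw0 : (0:ℝ) < w := lt_of_lt_of_le one_pos hw1
  set L : ℝ := 1/w with hLdef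
  have hL0 : 0 < L := by positivity
  have hrL : (r:ℝ) * L ≤ δ := by
    have h1 : (r:ℝ)/δ ≤ w := le_trans (le_max_right _ _) hw
    rw [hLdef, mul_one_div, div_le_iff₀ hw0]
    calc (r:ℝ) = (r/δ) * δ := by field_simp
    _ ≤ w * δ := mul_le_mul_of_nonneg_right h1 (le_of_lt hδ)
    _ = δ * w := mul_comm _ _
  set h : ℝ := Real.exp (1/w) with hdef
  have hlogh : Real.log h = L := Real.log_exp _
  have h1 : 1 ≤ h := Real.one_le_exp (le_of_lt hL0)
  have hh0 : 0 < h := lt_of_lt_of_le one_pos h1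
  set P := Set.univ.pi fun _ : Fin r => Set.Icc (1:ℝ) h with hPdef
  have hPm : MeasurableSet P := MeasurableSet.univ_pi fun _ => measurableSet_Icc
  set c : ℕ → ℝ := msCoeff r with hcdef
  have hspos : ∀ t ∈ P, 0 < ∏ i, t i := fun t ht =>
    Finset.prod_pos fun i _ => lt_of_lt_of_le one_pos (ht i trivial).1
  have hs1 : ∀ t ∈ P, 1 ≤ ∏ i, t i := by
    intro t ht
    have e : (1:ℝ) = ∏ _i : Fin r, (1:ℝ) := by simp
    rw [e]
    exact Finset.prod_le_prod (by intros; norm_num) (fun i _ => (ht i trivial).1)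
  have hsh : ∀ t ∈ P, ∏ i, t i ≤ h ^ r := by
    intro t ht
    calc ∏ i, t i ≤ ∏ _i : Fin r, h :=
          Finset.prod_le_prod (fun i _ => le_trans zero_le_one (ht i trivial).1)
            (fun i _ => (ht i trivial).2)
    _ = h ^ r := by simp
  -- key pointwise bound
  have hDbound : ∀ t ∈ P, ∀ m ∈ Finset.Icc 1 r,
      |f (y * (∏ i, t i) ^ ((m : ℝ) / (r : ℝ))) - f y| ≤ ε' := by
    intro t ht m hm
    set s := ∏ i, t i with hsdef
    have hs0 : 0 < s := hspos t ht
    have hlogs0 : 0 ≤ Real.log s := Real.log_nonneg (hs1 t ht)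
    have hlogsr : Real.log s ≤ (r:ℝ) * L := by
      calc Real.log s ≤ Real.log (h ^ r) := Real.log_le_log hs0 (hsh t ht)
      _ = (r:ℝ) * Real.log h := by rw [Real.log_pow]
      _ = (r:ℝ) * L := by rw [hlogh]
    have hmr : (m:ℝ)/(r:ℝ) ≤ 1 := by
      rw [div_le_one (by exact_mod_cast hr)]
      exact_mod_cast (Finset.mem_Icc.mp hm).2
    have hmr0 : 0 ≤ (m:ℝ)/(r:ℝ) := by positivity
    have ha : y * s ^ ((m : ℝ) / (r : ℝ)) = Real.exp (Real.log y + Real.log s * ((m:ℝ)/(r:ℝ))) := by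
      rw [Real.exp_add, Real.exp_log hy, ← Real.rpow_def_of_pos hs0]
    have hb : y = Real.exp (Real.log y) := (Real.exp_log hy).symm
    rw [ha]; nth_rewrite 2 [hb]
    apply hδf
    rw [add_sub_cancel_left, abs_of_nonneg (by positivity)]
    calc Real.log s * ((m:ℝ)/(r:ℝ)) ≤ Real.log s * 1 := by nlinarith
    _ = Real.log s := mul_one _
    _ ≤ (r:ℝ) * L := hlogsr
    _ ≤ δ := hrL
  -- integral identity
  set D : (Fin r → ℝ) → ℝ := fun t =>
    ∑ m ∈ Finset.Icc 1 r, c m * (f (y * (∏ i, t i) ^ ((m:ℝ)/(r:ℝ))) - f y) with hDdef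
  have hint1 : IntegrableOn (fun t : Fin r → ℝ =>
      (∑ m ∈ Finset.Icc 1 r, c m * f (y * (∏ i, t i) ^ ((m:ℝ)/(r:ℝ)))) * ∏ i, (t i)⁻¹)
      P volume := aux_integrableOn r f hfc y hy h c
  have hint2 : IntegrableOn (fun t : Fin r → ℝ => ∏ i, (t i)⁻¹) P volume :=
    aux_integrableOn_inv r h
  have hfuneq : (fun t : Fin r → ℝ =>
      (∑ m ∈ Finset.Icc 1 r, c m * f (y * (∏ i, t i) ^ ((m:ℝ)/(r:ℝ)))) * ∏ i, (t i)⁻¹)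
      = fun t => D t * ∏ i, (t i)⁻¹ + ((-1:ℝ)^r * f y) * ∏ i, (t i)⁻¹ := by
    funext t
    rw [hDdef]
    simp only [mul_sub]
    rw [Finset.sum_sub_distrib, ← Finset.sum_mul]
    rw [hcdef, msCoeff_sum r hr]
    ring
  have hfuneq2 : (fun t : Fin r → ℝ => D t * ∏ i, (t i)⁻¹)
      = fun t => ((∑ m ∈ Finset.Icc 1 r, c m * f (y * (∏ i, t i) ^ ((m:ℝ)/(r:ℝ)))) * ∏ i, (t i)⁻¹
          - ((-1:ℝ)^r * f y) * ∏ i, (t i)⁻¹) := by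
    funext t
    have := congrFun hfuneq t
    linarith [this]
  have hint3 : IntegrableOn (fun t : Fin r → ℝ => D t * ∏ i, (t i)⁻¹) P volume := by
    rw [hfuneq2]
    exact hint1.sub (hint2.const_mul _)
  have hIeq : (∫ t in P,
      (∑ m ∈ Finset.Icc 1 r, c m * f (y * (∏ i, t i) ^ ((m:ℝ)/(r:ℝ)))) * ∏ i, (t i)⁻¹)
      = (∫ t in P, D t * ∏ i, (t i)⁻¹) + ((-1:ℝ)^r * f y) * L^r := by
    rw [hfuneq, integral_add hint3 (hint2.const_mul _), integral_const_mul]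
    rw [hPdef, integral_pi_inv r h h1, hlogh]
  have hmsval : mellinSteklov r f h y - f y = ((-L) ^ r)⁻¹ * ∫ t in P, D t * ∏ i, (t i)⁻¹ := by
    have hmsunfold : mellinSteklov r f h y = ((-L)^r)⁻¹ *
        ((∫ t in P, D t * ∏ i, (t i)⁻¹) + ((-1:ℝ)^r * f y) * L^r) := by
      rw [mellinSteklov_eq, hlogh, ← hPdef, ← hcdef, hIeq]
    rw [hmsunfold, neg_pow, mul_add]
    have hn1 : ((-1:ℝ)^r * L^r)⁻¹ * ((-1:ℝ)^r * f y * L^r) = f y := by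
      have hL : L^r ≠ 0 := ne_of_gt (pow_pos hL0 r)
      have hsq : (-1:ℝ)^r * (-1:ℝ)^r = 1 := by
        rw [← pow_add]
        exact Even.neg_one_pow ⟨r, rfl⟩
      have hne : (-1:ℝ)^r ≠ 0 := pow_ne_zero _ (by norm_num)
      field_simp
    linear_combination hn1
  -- bound the remaining integral
  set B : ℝ := (∑ m ∈ Finset.Icc 1 r, (r.choose m : ℝ)) * ε' with hBdef
  have hBnn : 0 ≤ B := by
    apply mul_nonneg _ (le_of_lt hε')
    exact Finset.sum_nonneg fun m _ => by positivity
  have habs : |∫ t in P, D t * ∏ i, (t i)⁻¹| ≤ B * L ^ r := by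
    have hb : ‖∫ t in P, D t * ∏ i, (t i)⁻¹‖
        ≤ ∫ t in P, B * ∏ i, (t i)⁻¹ := by
      apply norm_integral_le_of_norm_le (hint2.const_mul B)
      filter_upwards [ae_restrict_mem hPm] with t ht
      rw [Real.norm_eq_abs, abs_mul]
      have hprodnn : 0 ≤ ∏ i, (t i)⁻¹ :=
        Finset.prod_nonneg fun i _ => inv_nonneg.mpr
          (le_trans zero_le_one (ht i trivial).1)
      rw [abs_of_nonneg hprodnn]
      apply mul_le_mul_of_nonneg_right _ hprodnn
      calc |D t| ≤ ∑ m ∈ Finset.Icc 1 r,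
            |c m * (f (y * (∏ i, t i) ^ ((m:ℝ)/(r:ℝ))) - f y)| := by
            rw [hDdef]
            exact Finset.abs_sum_le_sum_abs _ _
      _ ≤ ∑ m ∈ Finset.Icc 1 r, (r.choose m : ℝ) * ε' := by
            apply Finset.sum_le_sum
            intro m hm
            rw [abs_mul, hcdef, msCoeff_abs]
            exact mul_le_mul_of_nonneg_left (hDbound t ht m hm) (by positivity)
      _ = B := (Finset.sum_mul _ _ _).symm
    rw [Real.norm_eq_abs] at hb
    calc |∫ t in P, D t * ∏ i, (t i)⁻¹| ≤ ∫ t in P, B * ∏ i, (t i)⁻¹ := hb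
    _ = B * L ^ r := by rw [integral_const_mul, hPdef, integral_pi_inv r h h1, hlogh]
  have hsum2r : (∑ m ∈ Finset.Icc 1 r, (r.choose m : ℝ)) ≤ 2 ^ r := by
    have hsub : Finset.Icc 1 r ⊆ Finset.range (r+1) := by
      intro m hm
      simp only [Finset.mem_Icc] at hm
      simp only [Finset.mem_range]
      omega
    have h1 : ∑ m ∈ Finset.Icc 1 r, (r.choose m:ℝ)
        ≤ ∑ m ∈ Finset.range (r+1), (r.choose m:ℝ) :=
      Finset.sum_le_sum_of_subset_of_nonneg hsub (fun i _ _ => by positivity)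
    have h2 : ∑ m ∈ Finset.range (r+1), (r.choose m:ℝ) = (2:ℝ)^r := by
      rw [← Nat.cast_sum, Nat.sum_range_choose]
      push_cast
      ring
    linarith
  have hLrpos : (0:ℝ) < L ^ r := pow_pos hL0 r
  calc |mellinSteklov r f h y - f y| = (L^r)⁻¹ * |∫ t in P, D t * ∏ i, (t i)⁻¹| := by
        rw [hmsval, abs_mul, abs_inv, abs_pow, abs_neg, abs_of_pos hL0]
  _ ≤ (L^r)⁻¹ * (B * L^r) :=
        mul_le_mul_of_nonneg_left habs (inv_nonneg.mpr (le_of_lt hLrpos))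
  _ = B := by field_simp
  _ ≤ 2^r * ε' :=
        mul_le_mul_of_nonneg_right hsum2r (le_of_lt hε')
  _ = ε := by rw [hε'def]; field_simp


/-- uniform convergence of `E_{w,r}^χ f` for continuous bounded `f`
with compact support contained in `ℝ₊`. -/
theorem stmt_8 (χ : ℝ → ℝ) (hχ : IsKernel χ) (r : ℕ) (hr : 0 < r)
    (f : ℝ → ℝ) (hfc : ContinuousOn f (Set.Ioi 0))
    (hbdd : ∃ C, ∀ y : ℝ, 0 < y → |f y| ≤ C)
    (hsupp : ∃ K : Set ℝ, IsCompact K ∧ K ⊆ Set.Ioi 0 ∧ Function.support f ⊆ K) :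
    Tendsto (fun w => supNorm fun x => samplingOp χ r f w x - f x) atTop (nhds 0) := by
  classical
  obtain ⟨C₀, hC₀⟩ := hbdd
  set C : ℝ := max C₀ 0 with hCdef
  have hC : ∀ y : ℝ, 0 < y → |f y| ≤ C := fun y hy => le_trans (hC₀ y hy) (le_max_left _ _)
  have hC0 : 0 ≤ C := le_max_right _ _
  set M : ℝ := M0 χ with hMdef
  have hMle : ∀ u : ℝ, 0 < u → (∑' k : ℤ, |χ (Real.exp (-(k:ℝ)) * u)|) ≤ M := by
    intro u hu
    exact le_ciSup hχ.m0_bdd (⟨u, hu⟩ : Set.Ioi (0:ℝ))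
  have hM0 : 0 ≤ M := le_trans (tsum_nonneg fun k => abs_nonneg _) (hMle 1 one_pos)
  have huc := aux_uc f hfc hsupp
  have hne : Nonempty (Set.Ioi (0:ℝ)) := ⟨⟨1, Set.mem_Ioi.mpr one_pos⟩⟩
  rw [Metric.tendsto_atTop]
  intro ε hε
  set ε₁ : ℝ := ε / (8 * (M + 1)) with hε₁def
  have hε₁ : 0 < ε₁ := by positivity
  set ε₃ : ℝ := ε / (8 * (C + 1)) with hε₃def
  have hε₃ : 0 < ε₃ := by positivity
  obtain ⟨W₁, hW₁1, hW₁⟩ := steklov_close r hr f hfc huc ε₁ hε₁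
  obtain ⟨δ, hδ, hδf⟩ := huc ε₁ hε₁
  obtain ⟨γ, hγsup, hγ0⟩ :=
    ((hχ.decay.eventually (gt_mem_nhds hε₃)).and (eventually_ge_atTop (0:ℝ))).exists
  set N : ℝ := max W₁ (max (γ/δ) 1) with hNdef
  refine ⟨N, fun w hw => ?_⟩
  have hwW₁ : W₁ ≤ w := le_trans (le_max_left _ _) hw
  have hw1 : (1:ℝ) ≤ w := le_trans (le_trans (le_max_right _ _) (le_max_right _ _)) hw
  have hw0 : (0:ℝ) < w := lt_of_lt_of_le one_pos hw1
  have hwγδ : γ / δ ≤ w := le_trans (le_trans (le_max_left _ _) (le_max_right _ _)) hw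
  have hγδw : γ / w ≤ δ := by
    rw [div_le_iff₀ hw0]
    calc γ = (γ/δ) * δ := by field_simp
    _ ≤ w * δ := mul_le_mul_of_nonneg_right hwγδ (le_of_lt hδ)
    _ = δ * w := mul_comm _ _
  -- pointwise estimate
  have hpt : ∀ x : ℝ, 0 < x → |samplingOp χ r f w x - f x| ≤ ε/2 := by
    intro x hx
    set u : ℝ := x ^ w with hudef
    have hu : 0 < u := Real.rpow_pos_of_pos hx w
    set a : ℤ → ℝ := fun k => χ (Real.exp (-(k:ℝ)) * u) with hadef
    set F : ℤ → ℝ := fun k => mellinSteklov r f (Real.exp (1/w)) (Real.exp ((k:ℝ)/w)) with hFdef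
    have hsamp : samplingOp χ r f w x = ∑' k, a k * F k := rfl
    have ha_abs : Summable (fun k => |a k|) := hχ.summable_abs u hu
    have ha : Summable a := ha_abs.of_abs
    have hFf : ∀ k : ℤ, |F k - f (Real.exp ((k:ℝ)/w))| ≤ ε₁ :=
      fun k => hW₁ w hwW₁ _ (Real.exp_pos _)
    have hFb : ∀ k : ℤ, |F k| ≤ C + ε₁ := by
      intro k
      calc |F k| ≤ |F k - f (Real.exp ((k:ℝ)/w))| + |f (Real.exp ((k:ℝ)/w))| := by
            simpa using abs_add_le (F k - f (Real.exp ((k:ℝ)/w))) (f (Real.exp ((k:ℝ)/w)))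
      _ ≤ ε₁ + C := add_le_add (hFf k) (hC _ (Real.exp_pos _))
      _ = C + ε₁ := add_comm _ _
    have hd : ∀ k : ℤ, |F k - f x| ≤ 2*C + ε₁ := by
      intro k
      calc |F k - f x| ≤ |F k| + |f x| := abs_sub _ _
      _ ≤ (C + ε₁) + C := add_le_add (hFb k) (hC x hx)
      _ = 2*C + ε₁ := by ring
    have hsum1 : Summable (fun k => a k * F k) := by
      apply Summable.of_abs
      apply Summable.of_nonneg_of_le (fun k => abs_nonneg _) ?_ (ha_abs.mul_right (C + ε₁))
      intro k
      rw [abs_mul]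
      exact mul_le_mul_of_nonneg_left (hFb k) (abs_nonneg _)
    have hsum2 : Summable (fun k => a k * f x) := ha.mul_right _
    have he1 : samplingOp χ r f w x - f x = ∑' k, a k * (F k - f x) := by
      have e2 : ∑' k, a k * (F k - f x) = (∑' k, a k * F k) - ∑' k, a k * f x := by
        rw [← Summable.tsum_sub hsum1 hsum2]
        congr 1
        funext k
        ring
      rw [e2, tsum_mul_right, hχ.sum_eq_one u hu, one_mul, hsamp]
    -- summability of term bounds
    set g : ℤ → ℝ := fun k => |a k| * |F k - f x| with hgdef
    have hg : Summable g := by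
      apply Summable.of_nonneg_of_le (fun k => mul_nonneg (abs_nonneg _) (abs_nonneg _))
        ?_ (ha_abs.mul_right (2*C + ε₁))
      intro k
      exact mul_le_mul_of_nonneg_left (hd k) (abs_nonneg _)
    have habs1 : |∑' k, a k * (F k - f x)| ≤ ∑' k, g k := by
      have := norm_tsum_le_tsum_norm (f := fun k => a k * (F k - f x)) ?_
      · simpa [Real.norm_eq_abs, abs_mul, hgdef] using this
      · simpa [Real.norm_eq_abs, abs_mul, hgdef] using hg
    -- split g ≤ near + far
    set c2 : ℤ → ℝ := fun k => |f (Real.exp ((k:ℝ)/w)) - f x| with hc2def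
    have hgle : ∀ k, g k ≤ |a k| * ε₁ + |a k| * c2 k := by
      intro k
      rw [hgdef]
      simp only
      rw [← mul_add]
      apply mul_le_mul_of_nonneg_left ?_ (abs_nonneg _)
      calc |F k - f x| ≤ |F k - f (Real.exp ((k:ℝ)/w))| + |f (Real.exp ((k:ℝ)/w)) - f x| := by
            have := abs_sub_le (F k) (f (Real.exp ((k:ℝ)/w))) (f x)
            simpa using this
      _ ≤ ε₁ + c2 k := add_le_add (hFf k) (le_refl _)
    have hc2b : ∀ k, c2 k ≤ 2*C := by
      intro k
      calc c2 k ≤ |f (Real.exp ((k:ℝ)/w))| + |f x| := abs_sub _ _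
      _ ≤ C + C := add_le_add (hC _ (Real.exp_pos _)) (hC x hx)
      _ = 2*C := by ring
    have hsumc2 : Summable (fun k => |a k| * c2 k) := by
      apply Summable.of_nonneg_of_le
        (fun k => mul_nonneg (abs_nonneg _) (abs_nonneg _)) ?_ (ha_abs.mul_right (2*C))
      intro k
      exact mul_le_mul_of_nonneg_left (hc2b k) (abs_nonneg _)
    have hsplit : ∑' k, g k ≤ (∑' k, |a k| * ε₁) + ∑' k, |a k| * c2 k := by
      rw [← Summable.tsum_add (ha_abs.mul_right ε₁) hsumc2]
      exact Summable.tsum_le_tsum hgle hg ((ha_abs.mul_right ε₁).add hsumc2)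
    have hterm1 : (∑' k, |a k| * ε₁) ≤ M * ε₁ := by
      rw [tsum_mul_right]
      exact mul_le_mul_of_nonneg_right (hMle u hu) (le_of_lt hε₁)
    -- split the c2 sum over the tail set
    set T : Set ℤ := {k : ℤ | γ < |(k:ℝ) - Real.log u|} with hTdef
    have hsplit2 : (∑' k, |a k| * c2 k)
        = (∑' k : T, |a (k:ℤ)| * c2 (k:ℤ)) + ∑' k : ↑Tᶜ, |a (k:ℤ)| * c2 (k:ℤ) :=
      (Summable.tsum_add_tsum_compl (hsumc2.subtype T) (hsumc2.subtype Tᶜ)).symm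
    -- tail
    have htailsum : (∑' k : T, |a (k:ℤ)|) ≤ ε₃ := by
      have hle2 : (∑' k : T, |a (k:ℤ)|)
          ≤ ⨆ u : Set.Ioi (0:ℝ), ∑' k : {k : ℤ // γ < |(k : ℝ) - Real.log (u : ℝ)|},
            |χ (Real.exp (-((k : ℤ) : ℝ)) * (u : ℝ))| := by
        have hb : BddAbove (Set.range fun u : Set.Ioi (0:ℝ) =>
            ∑' k : {k : ℤ // γ < |(k : ℝ) - Real.log (u : ℝ)|},
              |χ (Real.exp (-((k : ℤ) : ℝ)) * (u : ℝ))|) := by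
          refine ⟨M, ?_⟩
          rintro z ⟨v, rfl⟩
          apply le_trans ?_ (hMle v v.2)
          exact Summable.tsum_le_tsum_of_inj Subtype.val Subtype.val_injective
            (fun c _ => abs_nonneg _) (fun k => le_refl _)
            ((hχ.summable_abs v v.2).subtype _) (hχ.summable_abs v v.2)
        exact le_ciSup hb (⟨u, hu⟩ : Set.Ioi (0:ℝ))
      exact le_trans hle2 (le_of_lt hγsup)
    have hterm2 : (∑' k : T, |a (k:ℤ)| * c2 (k:ℤ)) ≤ 2*C*ε₃ := by
      calc (∑' k : T, |a (k:ℤ)| * c2 (k:ℤ)) ≤ ∑' k : T, |a (k:ℤ)| * (2*C) := by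
            apply Summable.tsum_le_tsum ?_ (hsumc2.subtype T) ((ha_abs.mul_right (2*C)).subtype T)
            intro k
            exact mul_le_mul_of_nonneg_left (hc2b _) (abs_nonneg _)
      _ = (∑' k : T, |a (k:ℤ)|) * (2*C) := tsum_mul_right
      _ ≤ ε₃ * (2*C) := mul_le_mul_of_nonneg_right htailsum (by positivity)
      _ = 2*C*ε₃ := by ring
    -- near part
    have hnear : ∀ k : ↑Tᶜ, c2 (k:ℤ) ≤ ε₁ := by
      rintro ⟨k, hk⟩
      have hk' : |(k:ℝ) - Real.log u| ≤ γ := by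
        simp only [hTdef, Set.mem_compl_iff, Set.mem_setOf_eq, not_lt] at hk
        exact hk
      have hlogu : Real.log u = w * Real.log x := Real.log_rpow hx w
      have hdist : |(k:ℝ)/w - Real.log x| ≤ δ := by
        have he : (k:ℝ)/w - Real.log x = ((k:ℝ) - Real.log u)/w := by
          rw [hlogu]; field_simp
        rw [he, abs_div, abs_of_pos hw0]
        calc |(k:ℝ) - Real.log u| / w ≤ γ / w := (div_le_div_iff_of_pos_right hw0).mpr hk'
        _ ≤ δ := hγδw
      have : |f (Real.exp ((k:ℝ)/w)) - f (Real.exp (Real.log x))| ≤ ε₁ := hδf _ _ hdist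
      rwa [Real.exp_log hx] at this
    have hterm3 : (∑' k : ↑Tᶜ, |a (k:ℤ)| * c2 (k:ℤ)) ≤ M * ε₁ := by
      calc (∑' k : ↑Tᶜ, |a (k:ℤ)| * c2 (k:ℤ)) ≤ ∑' k : ↑Tᶜ, |a (k:ℤ)| * ε₁ := by
            apply Summable.tsum_le_tsum ?_ (hsumc2.subtype Tᶜ) ((ha_abs.mul_right ε₁).subtype Tᶜ)
            intro k
            exact mul_le_mul_of_nonneg_left (hnear k) (abs_nonneg _)
      _ = (∑' k : ↑Tᶜ, |a (k:ℤ)|) * ε₁ := tsum_mul_right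
      _ ≤ M * ε₁ := by
            apply mul_le_mul_of_nonneg_right ?_ (le_of_lt hε₁)
            apply le_trans ?_ (hMle u hu)
            exact Summable.tsum_le_tsum_of_inj Subtype.val Subtype.val_injective
              (fun c _ => abs_nonneg _) (fun k => le_refl _)
              (ha_abs.subtype _) ha_abs
    -- assemble
    have hMε₁ : M * ε₁ ≤ ε/8 := by
      rw [hε₁def, mul_div_assoc']
      rw [div_le_div_iff₀ (by positivity) (by norm_num)]
      nlinarith [hε.le, hM0]
    have hCε₃ : 2*C*ε₃ ≤ ε/4 := by
      rw [hε₃def, mul_div_assoc']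
      rw [div_le_div_iff₀ (by positivity) (by norm_num)]
      nlinarith [hε.le, hC0]
    calc |samplingOp χ r f w x - f x| = |∑' k, a k * (F k - f x)| := by rw [he1]
    _ ≤ ∑' k, g k := habs1
    _ ≤ (∑' k, |a k| * ε₁) + ∑' k, |a k| * c2 k := hsplit
    _ ≤ M * ε₁ + ((∑' k : T, |a (k:ℤ)| * c2 (k:ℤ)) + ∑' k : ↑Tᶜ, |a (k:ℤ)| * c2 (k:ℤ)) := by
          rw [← hsplit2]
          exact add_le_add_left hterm1 _
    _ ≤ M * ε₁ + (2*C*ε₃ + M * ε₁) := by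
          exact add_le_add_right (add_le_add hterm2 hterm3) _
    _ ≤ ε/8 + (ε/4 + ε/8) := by
          exact add_le_add hMε₁ (add_le_add hCε₃ hMε₁)
    _ = ε/2 := by ring
  -- conclude
  have hsupb : supNorm (fun x => samplingOp χ r f w x - f x) ≤ ε/2 := by
    rw [supNorm]
    apply ciSup_le
    rintro ⟨x, hx⟩
    exact hpt x hx
  have hsupnn : 0 ≤ supNorm (fun x => samplingOp χ r f w x - f x) :=
    Real.iSup_nonneg fun x => abs_nonneg _
  rw [Real.dist_eq, sub_zero, abs_of_nonneg hsupnn]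
  linarith
end
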